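/- For all u in (0,1), the expression π_out(0,u) = (1−u)⁶ / ((1 − 2u + 2u²)(1 − 4u + 5u² − 2u³ + u⁴)) satisfies the symmetry π_out(0,u) + π_out(0,1−u) = 1. -/

import Mathlib

noncomputable def piOutZero (u : ℝ) : ℝ :=
  (1 - u) ^ 6 / ((1 - 2 * u + 2 * u ^ 2) * (1 - 4 * u + 5 * u ^ 2 - 2 * u ^ 3 + u ^ 4))

theorem piOutZero_symmetry (u : ℝ) (h0 : 0 < u) (h1 : u < 1) :
    piOutZero u + piOutZero (1 - u) = 1 := by
  have hq : (1 - 2 * u + 2 * u ^ 2) ≠ 0 := by nlinarith [sq_nonneg (1 - u), sq_nonneg u]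
  have hr : (1 - 4 * u + 5 * u ^ 2 - 2 * u ^ 3 + u ^ 4) ≠ 0 := by
    nlinarith [sq_nonneg (u ^ 2 - u), sq_nonneg (2 * u - 1), mul_pos h0 (sub_pos.mpr h1)]
  unfold piOutZero
  have e1 : (1 - 2 * (1 - u) + 2 * (1 - u) ^ 2) = 1 - 2 * u + 2 * u ^ 2 := by ring
  have e2 : (1 - 4 * (1 - u) + 5 * (1 - u) ^ 2 - 2 * (1 - u) ^ 3 + (1 - u) ^ 4)
      = 1 - 4 * u + 5 * u ^ 2 - 2 * u ^ 3 + u ^ 4 := by ring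
  rw [e1, e2]
  rw [← add_div, div_eq_one_iff_eq (mul_ne_zero hq hr)]
  ring
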